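/- Let g ≥ 4 and k be integers with 2 ≤ k ≤ g-2, and let δ_2 ≤ δ_3 ≤ ... ≤ δ_g be a nondecreasing sequence of positive real numbers with product δ = δ_2·δ_3···δ_g. If δ ≥ ((g-1)!/(k-1)!)^{g(g-1)/k} / (g!)^{(g-1)(g-k)/k}, then (g!·δ)^{(g-k)/g} ≥ C(g-1, g-k) · (g-k)! · (δ_2·δ_3···δ_{g-k}). -/

import Mathlib

open Real

/-- The key numerical inequality in the proof of Theorem 3.1. -/
theorem hodge_inequality_for_types (g k : ℕ) (hg : 4 ≤ g)
    (hk : 2 ≤ k) (hkg : k + 2 ≤ g)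
    (δ : ℕ → ℝ) (hpos : ∀ i, 2 ≤ i → i ≤ g → 0 < δ i)
    (hmono : ∀ i j, 2 ≤ i → i ≤ j → j ≤ g → δ i ≤ δ j)
    (hδ : (∏ i ∈ Finset.Icc 2 g, δ i) ≥
        (((g - 1).factorial : ℝ) / ((k - 1).factorial : ℝ)) ^
          (((g : ℝ) * ((g : ℝ) - 1)) / (k : ℝ)) /
        ((g.factorial : ℝ)) ^ ((((g : ℝ) - 1) * ((g : ℝ) - (k : ℝ))) / (k : ℝ))) :
    ((g.factorial : ℝ) * ∏ i ∈ Finset.Icc 2 g, δ i) ^ (((g : ℝ) - (k : ℝ)) / (g : ℝ)) ≥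
      ((g - 1).choose (g - k) : ℝ) * ((g - k).factorial : ℝ) *
        ∏ i ∈ Finset.Icc 2 (g - k), δ i := by
  have hG4 : (4:ℝ) ≤ (g:ℝ) := by exact_mod_cast hg
  have hK2 : (2:ℝ) ≤ (k:ℝ) := by exact_mod_cast hk
  have hGK2 : (k:ℝ) + 2 ≤ (g:ℝ) := by exact_mod_cast hkg
  have hG0 : (0:ℝ) < g := by linarith
  have hG1 : (0:ℝ) < (g:ℝ) - 1 := by linarith
  have hK0 : (0:ℝ) < k := by linarith
  have hGKpos : (0:ℝ) < (g:ℝ) - k := by linarith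
  have hGK1 : (0:ℝ) < (g:ℝ) - k - 1 := by linarith
  have hA : (0:ℝ) < (g.factorial : ℝ) := by positivity
  have hC : (0:ℝ) < ((g-1).factorial : ℝ) / ((k-1).factorial : ℝ) := by positivity
  set D := ∏ i ∈ Finset.Icc 2 g, δ i with hDdef
  set Q := ∏ i ∈ Finset.Icc 2 (g-k), δ i with hQdef
  set R := ∏ i ∈ Finset.Icc (g-k+1) g, δ i with hRdef
  have hDpos : 0 < D := Finset.prod_pos fun i hi => by
    rcases Finset.mem_Icc.1 hi with ⟨h1, h2⟩; exact hpos i h1 h2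
  have hQpos : 0 < Q := Finset.prod_pos fun i hi => by
    rcases Finset.mem_Icc.1 hi with ⟨h1, h2⟩; exact hpos i h1 (h2.trans (by omega))
  have hRpos : 0 < R := Finset.prod_pos fun i hi => by
    rcases Finset.mem_Icc.1 hi with ⟨h1, h2⟩; exact hpos i (by omega) h2
  have hI1 : Finset.Icc 2 g = Finset.Ioc 1 g := by ext x; simp; omega
  have hI2 : Finset.Icc 2 (g-k) = Finset.Ioc 1 (g-k) := by ext x; simp; omega
  have hI3 : Finset.Icc (g-k+1) g = Finset.Ioc (g-k) g := by ext x; simp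
  have hsplit : Q * R = D := by
    rw [hQdef, hRdef, hDdef, hI1, hI2, hI3]
    exact Finset.prod_Ioc_consecutive δ (by omega) (by omega)
  have card1 : (Finset.Icc 2 (g-k)).card = g - k - 1 := by rw [Nat.card_Icc]; omega
  have card2 : (Finset.Icc (g-k+1) g).card = k := by rw [Nat.card_Icc]; omega
  have hm : 0 < δ (g-k+1) := hpos _ (by omega) (by omega)
  have hQm : Q ≤ δ (g-k+1) ^ (g-k-1) := by
    calc Q ≤ ∏ _i ∈ Finset.Icc 2 (g-k), δ (g-k+1) := by
          refine Finset.prod_le_prod (fun i hi => ?_) (fun i hi => ?_) <;>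
            rcases Finset.mem_Icc.1 hi with ⟨h1, h2⟩
          · exact (hpos i h1 (h2.trans (by omega))).le
          · exact hmono i (g-k+1) h1 (by omega) (by omega)
      _ = δ (g-k+1) ^ (g-k-1) := by rw [Finset.prod_const, card1]
  have hmR : δ (g-k+1) ^ k ≤ R := by
    calc δ (g-k+1) ^ k = ∏ _i ∈ Finset.Icc (g-k+1) g, δ (g-k+1) := by
          rw [Finset.prod_const, card2]
      _ ≤ R := by
          refine Finset.prod_le_prod (fun i hi => hm.le) (fun i hi => ?_)
          rcases Finset.mem_Icc.1 hi with ⟨h1, h2⟩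
          exact hmono (g-k+1) i (by omega) h1 h2
  have hQk : Q ^ k ≤ R ^ (g-k-1) := by
    calc Q ^ k ≤ (δ (g-k+1) ^ (g-k-1)) ^ k := pow_le_pow_left₀ hQpos.le hQm k
      _ = (δ (g-k+1) ^ k) ^ (g-k-1) := by rw [← pow_mul, ← pow_mul, Nat.mul_comm]
      _ ≤ R ^ (g-k-1) := pow_le_pow_left₀ (by positivity) hmR _
  have hnatkey : Q ^ (g-1) ≤ D ^ (g-k-1) := by
    calc Q ^ (g-1) = Q ^ (g-k-1) * Q ^ k := by rw [← pow_add]; congr 1; omega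
      _ ≤ Q ^ (g-k-1) * R ^ (g-k-1) := by
          exact mul_le_mul_of_nonneg_left hQk (by positivity)
      _ = (Q*R) ^ (g-k-1) := (mul_pow Q R _).symm
      _ = D ^ (g-k-1) := by rw [hsplit]
  have hQle : Q ≤ D ^ (((g:ℝ) - (k:ℝ) - 1)/((g:ℝ)-1)) := by
    have e1 : ((g:ℝ)-1) = ((g-1 : ℕ) : ℝ) := by
      have : (1:ℕ) ≤ g := by omega
      push_cast [this]; ring
    have e2 : ((g:ℝ)-(k:ℝ)-1) = ((g-k-1 : ℕ) : ℝ) := by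
      have h1 : k ≤ g := by omega
      have h2 : (1:ℕ) ≤ g - k := by omega
      push_cast [h1, h2]; ring
    have h1 : Q ^ ((g:ℝ)-1) ≤ D ^ ((g:ℝ)-(k:ℝ)-1) := by
      rw [e1, e2, Real.rpow_natCast, Real.rpow_natCast]
      exact hnatkey
    have h2 := Real.rpow_le_rpow (by positivity) h1
      (le_of_lt (by positivity : (0:ℝ) < 1/((g:ℝ)-1)))
    rw [← Real.rpow_mul hQpos.le, ← Real.rpow_mul hDpos.le,
      show ((g:ℝ)-1) * (1/((g:ℝ)-1)) = 1 from by field_simp,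
      show ((g:ℝ)-(k:ℝ)-1) * (1/((g:ℝ)-1)) = ((g:ℝ)-(k:ℝ)-1)/((g:ℝ)-1) from by ring,
      Real.rpow_one] at h2
    exact h2
  have hDrpow : ((g-1).factorial : ℝ)/((k-1).factorial : ℝ) /
      (g.factorial:ℝ) ^ (((g:ℝ)-(k:ℝ))/(g:ℝ)) ≤ D ^ ((k:ℝ)/((g:ℝ)*((g:ℝ)-1))) := by
    have h := Real.rpow_le_rpow (by positivity) hδ
      (le_of_lt (by positivity : (0:ℝ) < (k:ℝ)/((g:ℝ)*((g:ℝ)-1))))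
    rw [Real.div_rpow (by positivity) (by positivity),
      ← Real.rpow_mul hC.le, ← Real.rpow_mul hA.le,
      show (g:ℝ)*((g:ℝ)-1)/(k:ℝ) * ((k:ℝ)/((g:ℝ)*((g:ℝ)-1))) = 1 from by field_simp,
      show ((g:ℝ)-1)*((g:ℝ)-(k:ℝ))/(k:ℝ) * ((k:ℝ)/((g:ℝ)*((g:ℝ)-1)))
        = ((g:ℝ)-(k:ℝ))/(g:ℝ) from by field_simp,
      Real.rpow_one] at h
    exact h
  have hRHS : ((g-1).choose (g-k) : ℝ) * ((g-k).factorial : ℝ)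
      = ((g-1).factorial : ℝ)/((k-1).factorial:ℝ) := by
    have hnat : (g-1).choose (g-k) * (g-k).factorial * (k-1).factorial
        = (g-1).factorial := by
      have h := Nat.choose_mul_factorial_mul_factorial (show g-k ≤ g-1 by omega)
      rwa [show g-1-(g-k) = k-1 by omega] at h
    have hk1 : (0:ℝ) < ((k-1).factorial : ℝ) := by positivity
    field_simp
    exact_mod_cast hnat
  rw [ge_iff_le, hRHS]
  have hAe : (0:ℝ) < (g.factorial:ℝ) ^ (((g:ℝ)-(k:ℝ))/(g:ℝ)) := by positivity
  calc ((g-1).factorial:ℝ)/((k-1).factorial:ℝ) * Q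
      = (g.factorial:ℝ) ^ (((g:ℝ)-(k:ℝ))/(g:ℝ)) *
        (Q * (((g-1).factorial:ℝ)/((k-1).factorial:ℝ) /
          (g.factorial:ℝ) ^ (((g:ℝ)-(k:ℝ))/(g:ℝ)))) := by
        field_simp
    _ ≤ (g.factorial:ℝ) ^ (((g:ℝ)-(k:ℝ))/(g:ℝ)) *
        (D ^ (((g:ℝ)-(k:ℝ)-1)/((g:ℝ)-1)) * D ^ ((k:ℝ)/((g:ℝ)*((g:ℝ)-1)))) := by
        apply mul_le_mul_of_nonneg_left _ hAe.le
        exact mul_le_mul hQle hDrpow (by positivity) (by positivity)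
    _ = ((g.factorial:ℝ) * D) ^ (((g:ℝ)-(k:ℝ))/(g:ℝ)) := by
        rw [Real.mul_rpow hA.le hDpos.le, ← Real.rpow_add hDpos,
          show ((g:ℝ)-(k:ℝ)-1)/((g:ℝ)-1) + (k:ℝ)/((g:ℝ)*((g:ℝ)-1))
            = ((g:ℝ)-(k:ℝ))/(g:ℝ) from by field_simp; ring]
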